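/- A Banach space X is octahedral if and only if for every n ∈ ℕ, every ε > 0, and every x₁,...,xₙ ∈ S_X there exists y ∈ S_X such that ‖xᵢ + y‖ ≥ 2 − ε for every i ∈ {1,...,n}. -/
import Mathlib


/-- A norm on a Banach space is octahedral if for every finite-dimensional subspace `E`
and every `ε > 0` there is a norm-one `y` with `‖x + y‖ ≥ (1-ε)(‖x‖+‖y‖)` for all `x ∈ E`. -/
def IsOctahedral (E : Type*) [NormedAddCommGroup E] [NormedSpace ℝ E] : Prop :=
  ∀ F : Subspace ℝ E, FiniteDimensional ℝ F → ∀ ε : ℝ, 0 < ε →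
    ∃ y : E, ‖y‖ = 1 ∧ ∀ x ∈ F, (1 - ε) * (‖x‖ + ‖y‖) ≤ ‖x + y‖

/-- Scaling lemma: if two norm-one vectors `u, y` satisfy `‖u+y‖ ≥ 2-δ`, then
`‖t•u + y‖ ≥ (1-δ)(1+t)` for every `t ≥ 0`. -/
lemma oct_scale {X : Type*} [NormedAddCommGroup X] [NormedSpace ℝ X]
    (u y : X) (hu : ‖u‖ = 1) (hy : ‖y‖ = 1) {δ : ℝ} (hδ : 0 ≤ δ)
    (h : 2 - δ ≤ ‖u + y‖) {t : ℝ} (ht : 0 ≤ t) :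
    (1 - δ) * (1 + t) ≤ ‖t • u + y‖ := by
  rcases le_or_gt t 1 with hle | hgt
  · have he : u + y = (t • u + y) + (1 - t) • u := by module
    have h2 : ‖u + y‖ ≤ ‖t • u + y‖ + ‖(1 - t) • u‖ := he ▸ norm_add_le _ _
    have h3 : ‖(1 - t) • u‖ = 1 - t := by
      rw [norm_smul, hu, Real.norm_eq_abs, abs_of_nonneg (by linarith)]; ring
    nlinarith
  · have he : t • (u + y) = (t • u + y) + (t - 1) • y := by module
    have h2 : ‖t • (u + y)‖ ≤ ‖t • u + y‖ + ‖(t - 1) • y‖ := he ▸ norm_add_le _ _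
    have h3 : ‖(t - 1) • y‖ = t - 1 := by
      rw [norm_smul, hy, Real.norm_eq_abs, abs_of_nonneg (by linarith)]; ring
    have h4 : ‖t • (u + y)‖ = t * ‖u + y‖ := by
      rw [norm_smul, Real.norm_eq_abs, abs_of_nonneg ht]
    nlinarith

/-- a Banach space is octahedral iff for every finite family of norm-one
vectors and every `ε > 0` there is a norm-one `y` with `‖xᵢ + y‖ ≥ 2 - ε` for all `i`. -/
theorem stmt_2 (X : Type*) [NormedAddCommGroup X] [NormedSpace ℝ X] [CompleteSpace X] :
    IsOctahedral X ↔
      ∀ n : ℕ, ∀ ε : ℝ, 0 < ε → ∀ x : Fin n → X, (∀ i, ‖x i‖ = 1) →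
        ∃ y : X, ‖y‖ = 1 ∧ ∀ i, 2 - ε ≤ ‖x i + y‖ := by
  constructor
  · intro h n ε hε x hx
    have hfin : FiniteDimensional ℝ (Submodule.span ℝ (Set.range x)) :=
      FiniteDimensional.span_of_finite ℝ (Set.finite_range x)
    obtain ⟨y, hy, hy2⟩ := h (Submodule.span ℝ (Set.range x)) hfin (ε / 2) (by linarith)
    refine ⟨y, hy, fun i => ?_⟩
    have := hy2 (x i) (Submodule.subset_span (Set.mem_range_self i))
    rw [hx i, hy] at this
    linarith
  · intro h F hF ε hε
    haveI := hF
    set δ := ε / 2 with hδdef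
    have hδ : 0 < δ := by positivity
    -- the unit sphere of F, viewed in X
    set S : Set X := Subtype.val '' (Metric.sphere (0 : F) 1) with hS
    have hScompact : IsCompact S :=
      (isCompact_sphere (0 : F) 1).image continuous_subtype_val
    obtain ⟨t, hts, htfin, htcover⟩ := hScompact.finite_cover_balls hδ
    obtain ⟨n, f, -, hfrange⟩ := htfin.fin_param
    have hfS : ∀ i, f i ∈ S := fun i => hts (hfrange ▸ Set.mem_range_self i)
    have hfnorm : ∀ i, ‖f i‖ = 1 := by
      intro i
      obtain ⟨z, hz, hz2⟩ := hfS i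
      rw [← hz2, Submodule.norm_coe]
      exact mem_sphere_zero_iff_norm.mp hz
    obtain ⟨y, hy, hy2⟩ := h n δ hδ f hfnorm
    refine ⟨y, hy, fun x hxF => ?_⟩
    rcases eq_or_ne x 0 with rfl | hx0
    · simp only [norm_zero, zero_add, hy]
      linarith
    · have hxn : 0 < ‖x‖ := norm_pos_iff.mpr hx0
      set u : X := ‖x‖⁻¹ • x with hu
      have hun : ‖u‖ = 1 := by
        rw [hu, norm_smul, Real.norm_eq_abs, abs_of_pos (by positivity)]
        field_simp
      have huS : u ∈ S := by
        refine ⟨⟨u, Submodule.smul_mem F _ hxF⟩, ?_, rfl⟩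
        rw [mem_sphere_zero_iff_norm, ← Submodule.norm_coe]
        exact hun
      obtain ⟨z, hz, hzball⟩ := Set.mem_iUnion₂.mp (htcover huS)
      obtain ⟨i, rfl⟩ := hfrange ▸ hz
      have hdist : ‖u - f i‖ < δ := by
        have := Metric.mem_ball.mp hzball
        rwa [dist_eq_norm] at this
      have hscale : (1 - δ) * (1 + ‖x‖) ≤ ‖‖x‖ • f i + y‖ :=
        oct_scale (f i) y (hfnorm i) hy hδ.le (hy2 i) hxn.le
      have hxu : ‖x‖ • u = x := by rw [hu]; exact smul_inv_smul₀ hxn.ne' x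
      have he : ‖x‖ • f i + y = (x + y) + ‖x‖ • (f i - u) := by
        rw [smul_sub, hxu]; abel
      have h2 : ‖‖x‖ • f i + y‖ ≤ ‖x + y‖ + ‖x‖ * ‖u - f i‖ := by
        calc ‖‖x‖ • f i + y‖ ≤ ‖x + y‖ + ‖‖x‖ • (f i - u)‖ := he ▸ norm_add_le _ _
        _ = ‖x + y‖ + ‖x‖ * ‖u - f i‖ := by
            rw [norm_smul, Real.norm_eq_abs, abs_of_pos hxn, norm_sub_rev]
      have h3 : ‖x‖ * ‖u - f i‖ ≤ ‖x‖ * δ := by nlinarith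
      rw [hy]
      nlinarith
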